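/- For the K characterized above, the eigenvalue vector (h₁,…,h_M) is the unique solution to the system h_m = max{s_m − λ', 1/v} for all m together with Σ_m h_m = Σ_m s_m, v > 0. -/

import Mathlib

open BigOperators

/-- For the water-filling threshold index `K` (characterized by the max/trace
conditions), the pair `(v, (h_m))` with `v⁻¹ = (Kλ' + Σ_{m>K} s_m)/(M−K)`,
`h_m = s_m − λ'` for `m ≤ K`, `h_m = v⁻¹` otherwise, is the unique solution of
`h_m = max{s_m − λ', 1/v}` for all `m` together with `Σ h_m = Σ s_m`, `v > 0`. -/
theorem stmt15 (M : ℕ) (hM : 0 < M) (s : ℕ → ℝ) (lam : ℝ) (hlam : 0 < lam)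
    (hmono : ∀ i j, 1 ≤ i → i ≤ j → j ≤ M → s j ≤ s i)
    (hnn : ∀ m, 1 ≤ m → m ≤ M → 0 ≤ s m)
    (K : ℕ) (hK : K < M)
    (hGood :
      (∀ m ∈ Finset.Icc 1 M,
        (if m ≤ K then s m - lam
          else ((K : ℝ) * lam + ∑ m ∈ Finset.Icc (K + 1) M, s m) / ((M : ℝ) - K)) =
        max (s m - lam)
          (((K : ℝ) * lam + ∑ m ∈ Finset.Icc (K + 1) M, s m) / ((M : ℝ) - K))) ∧
      (∑ m ∈ Finset.Icc 1 M,
          (if m ≤ K then s m - lam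
            else ((K : ℝ) * lam + ∑ m ∈ Finset.Icc (K + 1) M, s m) / ((M : ℝ) - K)) =
        ∑ m ∈ Finset.Icc 1 M, s m)) :
    ∀ (v : ℝ) (h' : ℕ → ℝ), 0 < v →
      (∀ m ∈ Finset.Icc 1 M, h' m = max (s m - lam) v⁻¹) →
      (∑ m ∈ Finset.Icc 1 M, h' m = ∑ m ∈ Finset.Icc 1 M, s m) →
      (v⁻¹ = ((K : ℝ) * lam + ∑ m ∈ Finset.Icc (K + 1) M, s m) / ((M : ℝ) - K) ∧
        ∀ m ∈ Finset.Icc 1 M, h' m =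
          (if m ≤ K then s m - lam
            else ((K : ℝ) * lam + ∑ m ∈ Finset.Icc (K + 1) M, s m) / ((M : ℝ) - K))) := by
  intro v h' hv hmax hsum
  set c : ℝ := ((K : ℝ) * lam + ∑ m ∈ Finset.Icc (K + 1) M, s m) / ((M : ℝ) - K) with hc
  have hMK : (0 : ℝ) < (M : ℝ) - (K : ℝ) := by
    have : (K : ℝ) < (M : ℝ) := by exact_mod_cast hK
    linarith
  -- sum of max(..., c) equals sum s
  have hsumc : ∑ m ∈ Finset.Icc 1 M, max (s m - lam) c = ∑ m ∈ Finset.Icc 1 M, s m := by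
    rw [← hGood.2]
    exact Finset.sum_congr rfl fun m hm => (hGood.1 m hm).symm
  have hsumv : ∑ m ∈ Finset.Icc 1 M, max (s m - lam) v⁻¹ = ∑ m ∈ Finset.Icc 1 M, s m := by
    rw [← hsum]
    exact Finset.sum_congr rfl fun m hm => (hmax m hm).symm
  -- for m > K in range, s m - lam ≤ c
  have hle : ∀ m, K + 1 ≤ m → m ≤ M → s m - lam ≤ c := by
    intro m h1 h2
    have hm : m ∈ Finset.Icc 1 M := Finset.mem_Icc.mpr ⟨le_trans (Nat.succ_le_succ (Nat.zero_le K)) h1, h2⟩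
    have := hGood.1 m hm
    rw [if_neg (by omega)] at this
    exact (max_le_iff.mp this.ge).1
  have hveq : v⁻¹ = c := by
    rcases lt_trichotomy v⁻¹ c with hlt | heq | hgt
    · -- termwise equality forced
      have hpt : ∀ m ∈ Finset.Icc 1 M, max (s m - lam) v⁻¹ = max (s m - lam) c := by
        rw [← Finset.sum_eq_sum_iff_of_le (fun m _ => max_le_max le_rfl hlt.le)]
        rw [hsumv, hsumc]
      exfalso
      have hseq : ∀ m ∈ Finset.Icc (K + 1) M, s m = c + lam := by
        intro m hm
        obtain ⟨h1, h2⟩ := Finset.mem_Icc.mp hm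
        have hmem : m ∈ Finset.Icc 1 M := Finset.mem_Icc.mpr ⟨le_trans (Nat.succ_le_succ (Nat.zero_le K)) h1, h2⟩
        have h3 := hpt m hmem
        have h4 : max (s m - lam) c = c := max_eq_right (hle m h1 h2)
        rw [h4] at h3
        rcases max_cases (s m - lam) v⁻¹ with ⟨h5, _⟩ | ⟨h5, _⟩
        · rw [h5] at h3; linarith
        · rw [h5] at h3; linarith
      have hcardn : (Finset.Icc (K + 1) M).card = M - K := by
        rw [Nat.card_Icc]; omega
      have hA : ∑ m ∈ Finset.Icc (K + 1) M, s m = ((M : ℝ) - K) * (c + lam) := by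
        rw [Finset.sum_congr rfl hseq, Finset.sum_const, hcardn, nsmul_eq_mul]
        congr 1
        push_cast [Nat.cast_sub hK.le]
        ring
      have hcmul : c * ((M : ℝ) - K) = (K : ℝ) * lam + ∑ m ∈ Finset.Icc (K + 1) M, s m := by
        rw [hc]; field_simp
      rw [hA] at hcmul
      have hM1 : (1 : ℝ) ≤ (M : ℝ) := by exact_mod_cast hM
      nlinarith
    · exact heq
    · -- strict sum inequality
      exfalso
      have hMmem : M ∈ Finset.Icc 1 M := Finset.mem_Icc.mpr ⟨hM, le_rfl⟩
      have hlt : ∑ m ∈ Finset.Icc 1 M, max (s m - lam) c <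
          ∑ m ∈ Finset.Icc 1 M, max (s m - lam) v⁻¹ := by
        apply Finset.sum_lt_sum (fun m _ => max_le_max le_rfl hgt.le)
        refine ⟨M, hMmem, ?_⟩
        have h4 : max (s M - lam) c = c := max_eq_right (hle M hK M.le_refl)
        rw [h4]
        exact lt_of_lt_of_le hgt (le_max_right _ _)
      rw [hsumc, hsumv] at hlt
      exact lt_irrefl _ hlt
  refine ⟨hveq, fun m hm => ?_⟩
  rw [hmax m hm, hveq]
  exact (hGood.1 m hm).symm
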